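/- Let A = R[x, x^{-1}, ξ] over a Q-algebra R, with x invertible of degree 0 and ξ of cohomological degree −2, zero differential. Equip A with the right connection ∇_2(a∂_x + b∂_ξ) = ∂a/∂x + ∂b/∂ξ and the nondegenerate Poisson bivector π = x^{-1} ∂_ξ ∂_x. Then the class [D^∇_2(π)] = [x^{-2} ∂_ξ] in the Poisson cohomology H^1(T_π Pol(A/R,−2)) corresponds, under the compatibility isomorphism μ(−,π), to the class [x^{-1}dx] ∈ H^1(DR(A/R)) ≅ H^1_{dR}(𝔾_m/R), which is nonzero when R ≠ 0 is a Q-algebra. -/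

import Mathlib

/-!  STATEMENT 6: Let `A = R[x, x⁻¹, ξ]` (x invertible of degree 0, ξ of degree −2, zero
differential), with right connection `∇₂(a∂x + b∂ξ) = ∂a/∂x + ∂b/∂ξ` and the
non-degenerate Poisson bivector `π = x⁻¹ ∂ξ ∂x`.  Then the obstruction class
`[D^∇₂(π)] = [x⁻² ∂ξ]` in Poisson cohomology corresponds under the compatibility map
`μ(−, π)` to the class `[x⁻¹ dx] ∈ H¹(DR(A/R)) ≅ H¹_{dR}(𝔾ₘ/R)`, which is nonzero
when `R ≠ 0`.

We model `A = Polynomial (LaurentPolynomial R)` with `ξ` the outer variable and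
`x = T 1` the Laurent variable; `∂x` differentiates coefficients, `∂ξ = derivative`.
1-forms `u dx + v dξ` are pairs `(u,v)`; a bivector `c ∂ξ∂x` is its coefficient `c`;
contraction is `c∂ξ∂x ⌟ (u dx + v dξ) = −c·v ∂x + c·u ∂ξ`, i.e. `(−c*v, c*u)`; and for
this connection `D^∇₂(c ∂ξ∂x) = (∂ξ c) ∂x − (∂x c) ∂ξ`. -/

open LaurentPolynomial Polynomial

/-- The derivative `∂/∂x` on Laurent polynomials. -/
noncomputable def lderiv (R : Type*) [CommRing R] (f : LaurentPolynomial R) :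
    LaurentPolynomial R :=
  Finsupp.sum f.coeff fun n a => n • (LaurentPolynomial.C a * T (n - 1))

/-- The derivative `∂/∂x` on `A = R[x,x⁻¹][ξ]`, acting on coefficients. -/
noncomputable def dX (R : Type*) [CommRing R] (p : Polynomial (LaurentPolynomial R)) :
    Polynomial (LaurentPolynomial R) :=
  p.sum fun k c => Polynomial.C (lderiv R c) * Polynomial.X ^ k

theorem lderiv_zero (R : Type*) [CommRing R] : lderiv R 0 = 0 := by simp [lderiv]

theorem lderiv_apply_neg_one (R : Type*) [CommRing R] (f : LaurentPolynomial R) :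
    (lderiv R f).coeff (-1) = 0 := by
  rw [lderiv, Finsupp.sum, AddMonoidAlgebra.coeff_sum, Finsupp.finset_sum_apply]
  apply Finset.sum_eq_zero
  intro n hn
  rcases eq_or_ne n 0 with h|h
  · simp [h]
  · rw [← single_eq_C_mul_T]
    simp only [AddMonoidAlgebra.smul_single, AddMonoidAlgebra.coeff_single]
    rw [Finsupp.single_eq_of_ne' (by omega)]

theorem lderiv_T_neg_one (R : Type*) [CommRing R] : lderiv R (T (-1)) = - T (-2) := by
  rw [lderiv, T, AddMonoidAlgebra.coeff_single, Finsupp.sum_single_index]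
  · norm_num
  · simp

theorem dX_C (R : Type*) [CommRing R] (f : LaurentPolynomial R) :
    dX R (Polynomial.C f) = Polynomial.C (lderiv R f) := by
  rw [dX, Polynomial.sum_C_index]
  · simp
  · simp [lderiv]

theorem dX_coeff (R : Type*) [CommRing R] (p : Polynomial (LaurentPolynomial R)) (k : ℕ) :
    (dX R p).coeff k = lderiv R (p.coeff k) := by
  rw [dX, Polynomial.sum, Polynomial.finset_sum_coeff]
  simp only [Polynomial.coeff_C_mul, Polynomial.coeff_X_pow, mul_ite, mul_one, mul_zero]
  rw [Finset.sum_ite_eq p.support k (fun j => lderiv R (p.coeff j))]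
  split_ifs with h
  · rfl
  · rw [Polynomial.notMem_support_iff.mp h, lderiv_zero]

theorem stmt6 (R : Type*) [CommRing R] [Algebra ℚ R] :
    -- `c = x⁻¹` is the coefficient of the Poisson bivector `π = x⁻¹ ∂ξ∂x`
    let c : Polynomial (LaurentPolynomial R) := Polynomial.C (T (-1))
    -- `ω = x⁻¹ dx`
    let ω : Polynomial (LaurentPolynomial R) × Polynomial (LaurentPolynomial R) :=
      (Polynomial.C (T (-1)), 0)
    -- `D^∇₂(π)` corresponds to `μ(ω, π) = π ⌟ ω` (both equal `x⁻² ∂ξ`):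
    ((Polynomial.derivative c, - dX R c) = (- c * ω.2, c * ω.1)) ∧
    -- `ω` is a de Rham cocycle:
    (dX R ω.2 - Polynomial.derivative ω.1 = 0) ∧
    -- whose class is nonzero in `H¹(DR(A/R))` when `R ≠ 0`:
    (Nontrivial R → ¬ ∃ a : Polynomial (LaurentPolynomial R),
      dX R a = ω.1 ∧ Polynomial.derivative a = ω.2) := by
  intro c ω
  refine ⟨?_, ?_, ?_⟩
  · refine Prod.ext (by simp [c, ω]) ?_
    show - dX R c = c * ω.1
    rw [show c = Polynomial.C (T (-1)) from rfl, dX_C, lderiv_T_neg_one,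
      show ω.1 = Polynomial.C (T (-1)) from rfl, ← Polynomial.C_mul, ← T_add]
    norm_num
  · show dX R 0 - Polynomial.derivative (Polynomial.C (T (-1))) = 0
    rw [show (0 : Polynomial (LaurentPolynomial R)) = Polynomial.C 0 by simp, dX_C,
      lderiv_zero]
    simp
  · rintro hnt ⟨a, ha, -⟩
    have h1 : (dX R a).coeff 0 = T (-1) := by rw [ha]; simp [ω]
    rw [dX_coeff] at h1
    have h2 := lderiv_apply_neg_one R (a.coeff 0)
    rw [h1, T_apply, if_pos rfl] at h2
    exact one_ne_zero h2
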